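/- arXiv:2508.00681 — 5 statements merged into one kernel-verified Lean document; each statement's English description precedes it below -/
import Mathlib

section
/- A finite group G satisfies i(G) = c(G), where i(G) is the number of elements x with x^2 = 1 and c(G) is the number of cyclic subgroups of G, if and only if G is an elementary abelian 2-group (i.e., every element satisfies x^2 = 1). -/
noncomputable def numInv (G : Type*) [Group G] : ℕ := Nat.card {x : G // x ^ 2 = 1}

noncomputable def numCyc (G : Type*) [Group G] : ℕ := Nat.card {H : Subgroup G // IsCyclic H}

private lemma zpowers_isCyclic {G : Type*} [Group G] (g : G) :
    IsCyclic (Subgroup.zpowers g) := by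
  refine ⟨⟨⟨g, Subgroup.mem_zpowers g⟩, ?_⟩⟩
  rintro ⟨x, hx⟩
  obtain ⟨n, hn⟩ := hx
  exact ⟨n, Subtype.ext (by simpa using hn)⟩

private noncomputable def fmap (G : Type*) [Group G] :
    {x : G // x ^ 2 = 1} → {H : Subgroup G // IsCyclic H} :=
  fun x => ⟨Subgroup.zpowers (x : G), zpowers_isCyclic _⟩

private lemma fmap_inj (G : Type*) [Group G] : Function.Injective (fmap G) := by
  rintro ⟨x, hx⟩ ⟨y, hy⟩ h
  simp only [fmap, Subtype.mk.injEq] at h ⊢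
  have hxy : x ∈ Subgroup.zpowers y := h ▸ Subgroup.mem_zpowers x
  have hyx : y ∈ Subgroup.zpowers x := h.symm ▸ Subgroup.mem_zpowers y
  obtain ⟨n, hn⟩ := hxy
  obtain ⟨m, hm⟩ := hyx
  -- x = y ^ n with y ^ 2 = 1, so x ∈ {1, y}
  have hy2 : y ^ (2 : ℤ) = 1 := by exact_mod_cast hy
  have hx2 : x ^ (2 : ℤ) = 1 := by exact_mod_cast hx
  rcases Int.even_or_odd n with ⟨k, hk⟩ | ⟨k, hk⟩
  · have hx1 : x = 1 := by
      rw [← hn, hk]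
      calc y ^ (k + k) = (y ^ (2:ℤ)) ^ k := by rw [← zpow_mul]; ring_nf
        _ = 1 := by rw [hy2, one_zpow]
    subst hx1
    simpa using hm
  · rw [← hn, hk]
    calc y ^ (2*k + 1) = (y ^ (2:ℤ)) ^ k * y := by rw [← zpow_mul, zpow_add, zpow_one]
      _ = y := by rw [hy2, one_zpow, one_mul]

private lemma fmap_surj (G : Type*) [Group G] (h : ∀ x : G, x ^ 2 = 1) :
    Function.Surjective (fmap G) := by
  rintro ⟨H, hH⟩
  obtain ⟨⟨g, hgH⟩, hg⟩ := hH.exists_generator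
  refine ⟨⟨g, h g⟩, ?_⟩
  simp only [fmap, Subtype.mk.injEq]
  ext x
  constructor
  · rintro ⟨n, rfl⟩
    exact H.zpow_mem hgH n
  · intro hx
    obtain ⟨n, hn⟩ := hg ⟨x, hx⟩
    exact ⟨n, congrArg Subtype.val hn⟩

theorem stmt_0 (G : Type*) [Group G] [Finite G] :
    numInv G = numCyc G ↔ ∀ x : G, x ^ 2 = 1 := by
  constructor
  · intro hcard x
    have hbij : Function.Bijective (fmap G) :=
      (Nat.bijective_iff_injective_and_card (fmap G)).2 ⟨fmap_inj G, hcard⟩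
    obtain ⟨⟨y, hy⟩, hfy⟩ := hbij.2 ⟨Subgroup.zpowers x, zpowers_isCyclic x⟩
    have hzy : Subgroup.zpowers y = Subgroup.zpowers x := congrArg Subtype.val hfy
    have hxy : x ∈ Subgroup.zpowers y := hzy ▸ Subgroup.mem_zpowers x
    obtain ⟨n, hn⟩ := hxy
    have hy2 : y ^ (2 : ℤ) = 1 := by exact_mod_cast hy
    have : x ^ (2 : ℤ) = 1 := by
      rw [← hn, ← zpow_mul, mul_comm, zpow_mul, hy2, one_zpow]
    exact_mod_cast this
  · intro h
    exact Nat.card_eq_of_bijective (fmap G) ⟨fmap_inj G, fmap_surj G h⟩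
end

section
/- If G is a finite group in which more than 3/4 of the elements satisfy x^2 = 1, then G is an elementary abelian 2-group. -/
lemma half_top {G : Type*} [Group G] [Finite G] (H : Subgroup G)
    (h : 2 * Nat.card H > Nat.card G) : H = ⊤ := by
  have hm := H.card_mul_index
  have h0 : H.index ≠ 0 := Subgroup.index_ne_zero_of_finite
  rw [← Subgroup.index_eq_one]
  by_contra hne
  have h2 : 2 ≤ H.index := by omega
  have hc : 0 < Nat.card H := Nat.card_pos
  nlinarith [hm]

theorem stmt_2 (G : Type*) [Group G] [Finite G]
    (h : 4 * numInv G > 3 * Nat.card G) : ∀ x : G, x ^ 2 = 1 := by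
  classical
  have _inst := Fintype.ofFinite G
  have hNf : Nat.card G = Fintype.card G := Nat.card_eq_fintype_card
  set s : Finset G := Finset.univ.filter (fun x => x ^ 2 = 1) with hs
  have hsc : numInv G = s.card := by
    rw [numInv, Nat.card_eq_fintype_card, Fintype.card_subtype]
  -- every involution is central
  have hcen : ∀ a : G, a ^ 2 = 1 → a ∈ Subgroup.center G := by
    intro a ha
    have hainv : a⁻¹ = a := inv_eq_of_mul_eq_one_right (by rw [← pow_two]; exact ha)
    set t : Finset G := s.image (fun x => a * x) with ht
    have htc : t.card = s.card :=
      Finset.card_image_of_injective _ (mul_right_injective a)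
    have hsub : s ∩ t ⊆
        Finset.univ.filter (fun x => x ∈ Subgroup.centralizer ({a} : Set G)) := by
      intro x hx
      rw [Finset.mem_inter] at hx
      obtain ⟨hxs, hxt⟩ := hx
      rw [hs, Finset.mem_filter] at hxs
      have hx1 : x ^ 2 = 1 := hxs.2
      rw [ht, Finset.mem_image] at hxt
      obtain ⟨y, hy, hay⟩ := hxt
      rw [hs, Finset.mem_filter] at hy
      have hy1 : y ^ 2 = 1 := hy.2
      have hyx : y = a * x := by rw [← hay, ← mul_assoc, ← pow_two, ha, one_mul]
      have hax2 : (a * x) * (a * x) = 1 := by rw [← hyx, ← pow_two]; exact hy1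
      have hxinv : x⁻¹ = x := inv_eq_of_mul_eq_one_right (by rw [← pow_two]; exact hx1)
      have hcomm : a * x = x * a := by
        have : (a * x)⁻¹ = a * x := inv_eq_of_mul_eq_one_right hax2
        calc a * x = (a * x)⁻¹ := this.symm
          _ = x⁻¹ * a⁻¹ := by rw [mul_inv_rev]
          _ = x * a := by rw [hxinv, hainv]
      rw [Finset.mem_filter]
      exact ⟨Finset.mem_univ _, Subgroup.mem_centralizer_iff.mpr (by
        intro g hg
        rw [Set.mem_singleton_iff] at hg
        subst hg
        exact hcomm)⟩
    have hcard : (s ∩ t).card ≤ Nat.card (Subgroup.centralizer ({a} : Set G)) := by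
      rw [Nat.card_eq_fintype_card, Fintype.card_subtype]
      exact Finset.card_le_card hsub
    have hie : (s ∩ t).card + (s ∪ t).card = s.card + t.card :=
      Finset.card_inter_add_card_union s t
    have hun : (s ∪ t).card ≤ Fintype.card G := Finset.card_le_univ _
    have hbig : 2 * Nat.card (Subgroup.centralizer ({a} : Set G)) > Nat.card G := by
      omega
    have htop := half_top _ hbig
    rw [Subgroup.mem_center_iff]
    intro g
    have : g ∈ Subgroup.centralizer ({a} : Set G) := htop ▸ Subgroup.mem_top g
    exact (Subgroup.mem_centralizer_iff.mp this a rfl).symm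
  -- the involutions form a subgroup
  set H : Subgroup G :=
    { carrier := {x : G | x ^ 2 = 1}
      one_mem' := one_pow 2
      mul_mem' := by
        intro a b ha hb
        simp only [Set.mem_setOf_eq] at *
        have hc := Subgroup.mem_center_iff.mp (hcen a ha)
        have hcom : Commute a b := (hc b).symm
        rw [hcom.mul_pow, ha, hb, one_mul]
      inv_mem' := by
        intro a ha
        simp only [Set.mem_setOf_eq] at *
        rw [inv_pow, ha, inv_one] } with hH
  have hHc : Nat.card H = numInv G := rfl
  have hHtop : H = ⊤ := by
    apply half_top
    have hpos : 0 ≤ Nat.card G := Nat.zero_le _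
    omega
  intro x
  have : x ∈ H := hHtop ▸ Subgroup.mem_top x
  exact this
end

section
/- A finite group G satisfies i(G) = c(G) - 1 if and only if G is isomorphic to Z/4, the dihedral group D8 of order 8, Z/p for an odd prime p, or the dihedral group D_{2p} of order 2p for an odd prime p. -/
open Subgroup

section Aux

variable {G : Type*} [Group G]

/-- Key predicate: there is an element of order `> 2`, and all such elements
generate the same cyclic subgroup. -/
def PP (G : Type*) [Group G] : Prop :=
  (∃ g : G, 2 < orderOf g) ∧
    ∀ g h : G, 2 < orderOf g → 2 < orderOf h → zpowers g = zpowers h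

lemma isCyclic_zpowers (g : G) : IsCyclic (zpowers g) := by
  refine ⟨⟨g, mem_zpowers g⟩, ?_⟩
  rintro ⟨x, k, rfl⟩
  exact ⟨k, by ext; simp⟩

lemma exists_gen (K : Subgroup G) (h : IsCyclic K) :
    ∃ x : G, zpowers x = K ∧ orderOf x = Nat.card K := by
  obtain ⟨g, hg⟩ := h.exists_generator
  have h1 : zpowers (g : G) = K := by
    ext y
    constructor
    · rintro ⟨k, rfl⟩
      exact K.zpow_mem g.2 k
    · intro hy
      obtain ⟨k, hk⟩ := hg ⟨y, hy⟩
      exact ⟨k, by simpa using congrArg Subtype.val hk⟩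
  exact ⟨(g : G), h1, by rw [← Nat.card_zpowers (g : G), h1]⟩

variable [Finite G]

instance : Finite (Subgroup G) :=
  Finite.of_injective (fun H => (H : Set G)) SetLike.coe_injective

lemma sq_iff (x : G) : x ^ 2 = 1 ↔ orderOf x ≤ 2 := by
  constructor
  · intro h
    exact Nat.le_of_dvd two_pos (orderOf_dvd_of_pow_eq_one h)
  · intro h
    have hpos := orderOf_pos x
    have h2 : orderOf x ∣ 2 := by
      have : orderOf x = 1 ∨ orderOf x = 2 := by omega
      rcases this with h' | h' <;> rw [h'] <;> norm_num
    exact orderOf_dvd_iff_pow_eq_one.mp h2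

lemma mem_zpowers_of_sq {y : G} (hy : y ^ 2 = 1) {x : G} (hx : x ∈ zpowers y) :
    x = 1 ∨ x = y := by
  obtain ⟨k, rfl⟩ := hx
  have h2 : y ^ ((2 : ℤ)) = 1 := by
    rw [show (2 : ℤ) = ((2 : ℕ) : ℤ) from rfl, zpow_natCast, hy]
  rcases Int.even_or_odd k with ⟨m, rfl⟩ | ⟨m, rfl⟩
  · left
    show y ^ (m + m) = 1
    rw [show m + m = 2 * m by ring, zpow_mul, h2, one_zpow]
  · right
    show y ^ (2 * m + 1) = y
    rw [zpow_add, zpow_mul, h2, one_zpow, zpow_one, one_mul]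

/-- `numInv` equals the number of cyclic subgroups of cardinality at most 2. -/
lemma numInv_eq : numInv G = Nat.card {H : Subgroup G // IsCyclic H ∧ Nat.card H ≤ 2} := by
  apply Nat.card_eq_of_bijective
    (fun x => ⟨zpowers x.1, _root_.isCyclic_zpowers _, by
      rw [Nat.card_zpowers]; exact (sq_iff x.1).mp x.2⟩)
  constructor
  · rintro ⟨x, hx⟩ ⟨y, hy⟩ h
    have hzp : zpowers x = zpowers y := by simpa using congrArg Subtype.val h
    have hxy : x = 1 ∨ x = y := mem_zpowers_of_sq hy (hzp ▸ mem_zpowers x)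
    have hyx : y = 1 ∨ y = x := mem_zpowers_of_sq hx (hzp.symm ▸ mem_zpowers y)
    apply Subtype.ext
    rcases hxy with rfl | rfl
    · rcases hyx with rfl | rfl <;> rfl
    · rfl
  · rintro ⟨H, hc, hle⟩
    obtain ⟨x, hx1, hx2⟩ := exists_gen H hc
    have hx : x ^ 2 = 1 := (sq_iff x).mpr (le_of_eq_of_le hx2 hle)
    exact ⟨⟨x, hx⟩, Subtype.ext hx1⟩

lemma numCyc_eq : numCyc G = Nat.card {H : Subgroup G // IsCyclic H ∧ Nat.card H ≤ 2} +
    Nat.card {H : Subgroup G // IsCyclic H ∧ 2 < Nat.card H} := by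
  rw [numCyc, ← Nat.card_sum]
  apply Nat.card_congr
  refine ⟨fun x => if h : Nat.card x.1 ≤ 2 then .inl ⟨x.1, x.2, h⟩ else
      .inr ⟨x.1, x.2, lt_of_not_ge h⟩,
    Sum.elim (fun x => ⟨x.1, x.2.1⟩) (fun x => ⟨x.1, x.2.1⟩), ?_, ?_⟩
  · rintro ⟨H, hH⟩
    by_cases h : Nat.card H ≤ 2 <;> simp [h]
  · rintro (⟨H, h1, h2⟩ | ⟨H, h1, h2⟩)
    · simp [h2]
    · simp [not_le.mpr h2]

lemma crit : numInv G = numCyc G - 1 ↔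
    Nat.card {H : Subgroup G // IsCyclic H ∧ 2 < Nat.card H} = 1 := by
  have h1 : 1 ≤ numInv G := by
    have : Nonempty {x : G // x ^ 2 = 1} := ⟨⟨1, one_pow 2⟩⟩
    exact Nat.card_pos
  rw [numCyc_eq, ← numInv_eq]
  omega

lemma crit2 : Nat.card {H : Subgroup G // IsCyclic H ∧ 2 < Nat.card H} = 1 ↔ PP G := by
  rw [Nat.card_eq_one_iff_exists]
  constructor
  · rintro ⟨⟨H, hc, hcard⟩, huniq⟩
    obtain ⟨x, hx1, hx2⟩ := exists_gen H hc
    constructor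
    · exact ⟨x, hx2 ▸ hcard⟩
    · intro g h hg hh
      have e1 := huniq ⟨zpowers g, _root_.isCyclic_zpowers g, by rwa [Nat.card_zpowers]⟩
      have e2 := huniq ⟨zpowers h, _root_.isCyclic_zpowers h, by rwa [Nat.card_zpowers]⟩
      have := congrArg Subtype.val (e1.trans e2.symm)
      simpa using this
  · rintro ⟨⟨g0, hg0⟩, huniq⟩
    refine ⟨⟨zpowers g0, _root_.isCyclic_zpowers g0, by rwa [Nat.card_zpowers]⟩, ?_⟩
    rintro ⟨K, hK, hKc⟩
    obtain ⟨x, hx1, hx2⟩ := exists_gen K hK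
    apply Subtype.ext
    simp only
    rw [← hx1]
    exact huniq x g0 (hx2 ▸ hKc) hg0

end Aux

section Transport

lemma PP_transport {G G' : Type*} [Group G] [Group G'] (e : G ≃* G') (h : PP G') : PP G := by
  obtain ⟨⟨g', hg'⟩, huniq⟩ := h
  constructor
  · exact ⟨e.symm g', by rwa [← MulEquiv.orderOf_eq e.symm g'] at hg'⟩
  · intro g h hg hh
    have h1 : zpowers (e g) = zpowers (e h) :=
      huniq _ _ (by rwa [MulEquiv.orderOf_eq]) (by rwa [MulEquiv.orderOf_eq])
    have h2 := congrArg (Subgroup.map e.symm.toMonoidHom) h1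
    rw [MonoidHom.map_zpowers, MonoidHom.map_zpowers] at h2
    simpa using h2

end Transport

section Backward

lemma PP_of_cyclic (G : Type*) [Group G] [Finite G] [IsCyclic G] (h2 : 2 < Nat.card G)
    (hdvd : ∀ d, d ∣ Nat.card G → 2 < d → d = Nat.card G) : PP G := by
  obtain ⟨g, hg⟩ := IsCyclic.exists_generator (α := G)
  have horder : orderOf g = Nat.card G := orderOf_eq_card_of_forall_mem_zpowers hg
  have key : ∀ x : G, 2 < orderOf x → zpowers x = ⊤ := by
    intro x hx
    have h1 : orderOf x = Nat.card G := hdvd _ (orderOf_dvd_natCard x) hx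
    apply Subgroup.eq_top_of_card_eq
    rw [Nat.card_zpowers, h1]
  exact ⟨⟨g, horder ▸ h2⟩, fun x y hx hy => (key x hx).trans (key y hy).symm⟩

lemma PP_dihedral (n : ℕ) (h2 : 2 < n) (hdvd : ∀ d, d ∣ n → 2 < d → d = n) :
    PP (DihedralGroup n) := by
  haveI : NeZero n := ⟨by omega⟩
  have key : ∀ x : DihedralGroup n, 2 < orderOf x →
      zpowers x = zpowers (DihedralGroup.r 1) := by
    rintro (i | i) hx
    · have hri : DihedralGroup.r i = (DihedralGroup.r 1) ^ i.val := by
        rw [DihedralGroup.r_one_pow, ZMod.natCast_zmod_val]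
      have hdvd' : orderOf (DihedralGroup.r i) ∣ n := by
        rw [hri]
        have h := orderOf_pow_dvd (x := (DihedralGroup.r 1 : DihedralGroup n)) i.val
        rwa [DihedralGroup.orderOf_r_one] at h
      have ho : orderOf (DihedralGroup.r i) = n := hdvd _ hdvd' hx
      apply Subgroup.eq_of_le_of_card_ge
      · rw [Subgroup.zpowers_le, hri]
        exact zpow_mem (mem_zpowers _) (i.val : ℤ)
      · rw [Nat.card_zpowers, Nat.card_zpowers, ho, DihedralGroup.orderOf_r_one]
    · rw [DihedralGroup.orderOf_sr] at hx
      omega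
  refine ⟨⟨DihedralGroup.r 1, ?_⟩, fun x y hx hy => (key x hx).trans (key y hy).symm⟩
  rw [DihedralGroup.orderOf_r_one]
  exact h2

lemma div4 : ∀ d, d ∣ 4 → 2 < d → d = 4 := by
  intro d hd h2
  have h4 := Nat.le_of_dvd (by norm_num) hd
  interval_cases d
  · exact absurd hd (by norm_num)
  · rfl

lemma divP (p : ℕ) (hp : p.Prime) : ∀ d, d ∣ p → 2 < d → d = p := by
  intro d hd h2
  rcases (Nat.Prime.eq_one_or_self_of_dvd hp d hd) with h | h
  · omega
  · exact h

lemma cardMulZMod (n : ℕ) : Nat.card (Multiplicative (ZMod n)) = n := by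
  rw [Nat.card_congr Multiplicative.toAdd, Nat.card_zmod]

end Backward

section Forward

variable {G : Type*} [Group G] [Finite G]

lemma dihedral_iso (g0 t : G) (n : ℕ) (hn : orderOf g0 = n) (h2 : 2 < n)
    (ht : t ∉ zpowers g0) (ht2 : t * t = 1) (hconj : t * g0 * t = g0⁻¹)
    (hL : ∀ x : G, x ∉ zpowers g0 → t * x ∈ zpowers g0) :
    Nonempty (G ≃* DihedralGroup n) := by
  haveI : NeZero n := ⟨by omega⟩
  have htinv : t⁻¹ = t := inv_eq_of_mul_eq_one_right ht2
  set cap : ZMod n → G := fun i => g0 ^ ((i.val : ℤ)) with hcap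
  have cap_cast : ∀ k : ℤ, cap ((k : ZMod n)) = g0 ^ k := by
    intro k
    apply (zpow_eq_zpow_iff_modEq).mpr
    rw [hn, ← ZMod.intCast_eq_intCast_iff]
    push_cast
    rw [ZMod.natCast_zmod_val]
  have cap_mem : ∀ i, cap i ∈ zpowers g0 := fun i => zpow_mem (mem_zpowers g0) _
  have cap_eq : ∀ i : ZMod n, cap i = g0 ^ ((i.val : ℤ)) := fun i => rfl
  have val_cast : ∀ i : ZMod n, ((i.val : ℤ) : ZMod n) = i := by
    intro i
    push_cast
    rw [ZMod.natCast_zmod_val]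
  have cap_add : ∀ i j : ZMod n, cap (i + j) = cap i * cap j := by
    intro i j
    conv_lhs => rw [← val_cast i, ← val_cast j]
    rw [← Int.cast_add, cap_cast, cap_eq, cap_eq, zpow_add]
  have conj_cap : ∀ i : ZMod n, t * cap i * t = cap (-i) := by
    intro i
    have e2 : cap (-i) = g0 ^ (-(i.val : ℤ)) := by
      have e3 : ((-(i.val : ℤ) : ℤ) : ZMod n) = -i := by
        push_cast [ZMod.natCast_zmod_val]
        ring
      rw [← e3, cap_cast]
    rw [cap_eq, e2]
    have h3 : t * g0 ^ ((i.val : ℤ)) * t⁻¹ = (t * g0 * t⁻¹) ^ ((i.val : ℤ)) := by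
      simpa [MulAut.conj_apply] using (map_zpow (MulAut.conj t) g0 ((i.val : ℤ))).symm
    rw [htinv] at h3
    rw [h3, hconj, inv_zpow, ← zpow_neg]
  have cap_comm : ∀ i : ZMod n, cap i * t = t * cap (-i) := by
    intro i
    have h4 := conj_cap (-i)
    rw [neg_neg] at h4
    rw [← h4, mul_assoc, ht2, mul_one]
  set f : DihedralGroup n → G := fun x => match x with
    | DihedralGroup.r i => cap i
    | DihedralGroup.sr i => t * cap i with hf
  have fmul : ∀ a b : DihedralGroup n, f (a * b) = f a * f b := by
    rintro (i | i) (j | j)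
    · show cap (i + j) = cap i * cap j
      exact cap_add i j
    · show t * cap (j - i) = cap i * (t * cap j)
      rw [← mul_assoc, cap_comm, mul_assoc, ← cap_add]
      ring_nf
    · show t * cap (i + j) = t * cap i * cap j
      rw [mul_assoc, ← cap_add]
    · show cap (j - i) = t * cap i * (t * cap j)
      have h5 : t * cap i * (t * cap j) = (t * cap i * t) * cap j := by group
      rw [h5, conj_cap, ← cap_add]
      ring_nf
  let fhom : DihedralGroup n →* G := MonoidHom.mk' f fmul
  have hfr : ∀ i : ZMod n, fhom (DihedralGroup.r i) = cap i := fun _ => rfl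
  have hfsr : ∀ i : ZMod n, fhom (DihedralGroup.sr i) = t * cap i := fun _ => rfl
  have cap_inj : Function.Injective cap := by
    intro i j hij
    rw [cap_eq, cap_eq] at hij
    have h6 : ((i.val : ℤ)) ≡ ((j.val : ℤ)) [ZMOD (orderOf g0)] :=
      (zpow_eq_zpow_iff_modEq).mp hij
    rw [hn] at h6
    have h7 : ((i.val : ℤ) : ZMod n) = ((j.val : ℤ) : ZMod n) :=
      (ZMod.intCast_eq_intCast_iff _ _ _).mpr h6
    rwa [val_cast, val_cast] at h7
  have tcap_notmem : ∀ i : ZMod n, t * cap i ∉ zpowers g0 := by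
    intro i h
    apply ht
    have h' : (t * cap i) * (cap i)⁻¹ ∈ zpowers g0 :=
      mul_mem h (inv_mem (cap_mem i))
    rwa [mul_assoc, mul_inv_cancel, mul_one] at h'
  have hbij : Function.Bijective fhom := by
    constructor
    · rintro (i | i) (j | j) hij
      · rw [hfr, hfr] at hij
        exact congrArg DihedralGroup.r (cap_inj hij)
      · rw [hfr, hfsr] at hij
        exact absurd (hij ▸ cap_mem i) (tcap_notmem j)
      · rw [hfsr, hfr] at hij
        exact absurd (hij.symm ▸ cap_mem j) (tcap_notmem i)
      · rw [hfsr, hfsr] at hij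
        have h8 : cap i = cap j := by
          have h9 := congrArg (fun z => t * z) hij
          simpa [← mul_assoc, ht2] using h9
        exact congrArg DihedralGroup.sr (cap_inj h8)
    · intro x
      by_cases hx : x ∈ zpowers g0
      · obtain ⟨k, hk⟩ := hx
        have hk' : g0 ^ k = x := hk
        exact ⟨DihedralGroup.r ((k : ZMod n)), by rw [hfr, cap_cast]; exact hk'⟩
      · obtain ⟨k, hk⟩ := hL x hx
        have hk' : g0 ^ k = t * x := hk
        refine ⟨DihedralGroup.sr ((k : ZMod n)), ?_⟩
        rw [hfsr, cap_cast, hk', ← mul_assoc, ht2, one_mul]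
  exact ⟨(MulEquiv.ofBijective fhom hbij).symm⟩

lemma forward (hP : PP G) :
    Nonempty (G ≃* Multiplicative (ZMod 4)) ∨
      Nonempty (G ≃* DihedralGroup 4) ∨
      (∃ p : ℕ, p.Prime ∧ Odd p ∧ Nonempty (G ≃* Multiplicative (ZMod p))) ∨
      (∃ p : ℕ, p.Prime ∧ Odd p ∧ Nonempty (G ≃* DihedralGroup p)) := by
  obtain ⟨⟨g0, hg0⟩, huniq⟩ := hP
  set n := orderOf g0 with hn
  set C := zpowers g0 with hC
  have hall : ∀ x : G, 2 < orderOf x → x ∈ C := by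
    intro x hx
    rw [hC, ← huniq x g0 hx hg0]
    exact mem_zpowers x
  have hout : ∀ x : G, x ∉ C → x * x = 1 := by
    intro x hx
    have h1 : x ^ 2 = 1 := by
      rw [sq_iff]
      by_contra h
      exact hx (hall x (by omega))
    rwa [pow_two] at h1
  have hg0sq : g0 * g0 ≠ 1 := by
    intro h
    have h1 := (sq_iff g0).mp (by rwa [pow_two])
    omega
  have hdvd : ∀ d, d ∣ n → 2 < d → d = n := by
    intro d hd h2d
    have hn0 : n ≠ 0 := by omega
    set x := g0 ^ (n / d) with hx
    have hgcd : Nat.gcd n (n / d) = n / d := Nat.gcd_eq_right (Nat.div_dvd_of_dvd hd)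
    have hox : orderOf x = d := by
      rw [hx, orderOf_pow, ← hn, hgcd, Nat.div_div_self hd hn0]
    have h3 := huniq x g0 (hox ▸ h2d) hg0
    have hcard : orderOf x = orderOf g0 := by
      rw [← Nat.card_zpowers, ← Nat.card_zpowers, h3]
    rw [← hox, hcard]
  have n4P : n = 4 ∨ (n.Prime ∧ Odd n) := by
    rcases Nat.even_or_odd n with he | ho
    · left
      obtain ⟨m, hm⟩ := he
      by_cases hm2 : 2 < m
      · exfalso
        have := hdvd m ⟨2, by omega⟩ hm2
        omega
      · omega
    · right
      refine ⟨?_, ho⟩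
      rw [Nat.prime_def]
      refine ⟨by omega, ?_⟩
      intro m hm
      by_cases hm1 : m = 1
      · left; exact hm1
      · right
        apply hdvd m hm
        have hm0 : m ≠ 0 := by
          rintro rfl
          rw [Nat.zero_dvd] at hm
          omega
        rw [Nat.odd_iff] at ho
        have h2m : ¬ 2 ∣ m := by
          intro h
          have h' := h.trans hm
          omega
        omega
  by_cases hCall : ∀ x : G, x ∈ C
  · haveI hcyc : IsCyclic G := ⟨g0, hCall⟩
    have hcard : Nat.card G = n := (orderOf_eq_card_of_forall_mem_zpowers hCall).symm
    have e : Nonempty (G ≃* Multiplicative (ZMod n)) := by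
      rw [← hcard]
      exact ⟨(zmodCyclicMulEquiv hcyc).symm⟩
    rcases n4P with h4 | ⟨hp, hodd⟩
    · left; rw [← h4]; exact e
    · right; right; left; exact ⟨n, hp, hodd, e⟩
  · push_neg at hCall
    obtain ⟨t, ht⟩ := hCall
    have ht2 : t * t = 1 := hout t ht
    have htinv : t⁻¹ = t := inv_eq_of_mul_eq_one_right ht2
    have hconj' : ∀ x : G, x ∉ C → x * g0 * x = g0⁻¹ := by
      intro x hx
      have hxg : x * g0 ∉ C := by
        intro h
        apply hx
        have h' : (x * g0) * g0⁻¹ ∈ C := mul_mem h (inv_mem (mem_zpowers g0))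
        rwa [mul_assoc, mul_inv_cancel, mul_one] at h'
      have h1 : (x * g0) * (x * g0) = 1 := hout _ hxg
      have h2 : (x * g0 * x) * g0 = 1 := by rw [← h1]; group
      exact eq_inv_of_mul_eq_one_left h2
    have hct : t * g0 * t = g0⁻¹ := hconj' t ht
    have hL : ∀ x : G, x ∉ C → t * x ∈ C := by
      intro x hx
      by_contra hu
      have hxsq : x * x = 1 := hout x hx
      have hxinv : x⁻¹ = x := inv_eq_of_mul_eq_one_right hxsq
      have husq : (t * x) * (t * x) = 1 := hout _ hu
      have huinv : (t * x)⁻¹ = t * x := inv_eq_of_mul_eq_one_right husq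
      have hcomm : x * t = t * x := by
        have h10 : (t * x)⁻¹ = x⁻¹ * t⁻¹ := mul_inv_rev t x
        rw [huinv, hxinv, htinv] at h10
        exact h10.symm
      have hcu : (t * x) * g0 * (t * x) = g0⁻¹ := hconj' _ hu
      have hcx : x * g0 * x = g0⁻¹ := hconj' x hx
      have hg2 : (t * x) * g0 * (t * x) = g0 := by
        have h11 : (t * x) * g0 * (x * t) = (t * x) * g0 * (t * x) := by rw [hcomm]
        rw [← h11]
        have h12 : (t * x) * g0 * (x * t) = t * (x * g0 * x) * t := by group
        rw [h12, hcx]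
        have h13 : t * g0⁻¹ * t = (t * g0 * t)⁻¹ := by
          rw [mul_inv_rev, mul_inv_rev, htinv]
          group
        rw [h13, hct, inv_inv]
      apply hg0sq
      have h14 : g0 = g0⁻¹ := hg2.symm.trans hcu
      nth_rewrite 2 [h14]
      rw [mul_inv_cancel]
    have hiso := dihedral_iso g0 t n hn.symm hg0 ht ht2 hct hL
    rcases n4P with h4 | ⟨hp, hodd⟩
    · right; left; rw [← h4]; exact hiso
    · right; right; right; exact ⟨n, hp, hodd, hiso⟩

end Forward

theorem stmt_3 (G : Type*) [Group G] [Finite G] :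
    numInv G = numCyc G - 1 ↔
      Nonempty (G ≃* Multiplicative (ZMod 4)) ∨
      Nonempty (G ≃* DihedralGroup 4) ∨
      (∃ p : ℕ, p.Prime ∧ Odd p ∧ Nonempty (G ≃* Multiplicative (ZMod p))) ∨
      (∃ p : ℕ, p.Prime ∧ Odd p ∧ Nonempty (G ≃* DihedralGroup p)) := by
  rw [crit, crit2]
  constructor
  · exact forward
  · rintro (h | h | h | h)
    · obtain ⟨e⟩ := h
      refine PP_transport e (PP_of_cyclic (Multiplicative (ZMod 4)) ?_ ?_)
      · rw [cardMulZMod]; norm_num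
      · rw [cardMulZMod]; exact div4
    · obtain ⟨e⟩ := h
      exact PP_transport e (PP_dihedral 4 (by norm_num) div4)
    · obtain ⟨p, hp, hodd, ⟨e⟩⟩ := h
      haveI : NeZero p := ⟨hp.pos.ne'⟩
      have hp3 : 3 ≤ p := by
        have h2 := hp.two_le
        have : p ≠ 2 := by
          rintro rfl
          simp [Nat.odd_iff] at hodd
        omega
      refine PP_transport e (PP_of_cyclic (Multiplicative (ZMod p)) ?_ ?_)
      · rw [cardMulZMod]; omega
      · rw [cardMulZMod]; exact divP p hp
    · obtain ⟨p, hp, hodd, ⟨e⟩⟩ := h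
      have hp3 : 3 ≤ p := by
        have h2 := hp.two_le
        have : p ≠ 2 := by
          rintro rfl
          simp [Nat.odd_iff] at hodd
        omega
      exact PP_transport e (PP_dihedral p (by omega) (divP p hp))
end

section
/- If a finite group H satisfies i(H) = c(H) - r, then the group H × Z/2 satisfies i(H × Z/2) = c(H × Z/2) - 2r. -/
open Subgroup

section Aux

abbrev M2 := Multiplicative (ZMod 2)

lemma M2.sq (ε : M2) : ε ^ (2:ℕ) = 1 := by revert ε; decide

lemma M2.cases (ε : M2) : ε = 1 ∨ ε = Multiplicative.ofAdd 1 := by revert ε; decide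

lemma M2.zpow_odd (ε : M2) {k : ℤ} (hk : Odd k) : ε ^ k = ε := by
  obtain ⟨j, rfl⟩ := hk
  rw [zpow_add, zpow_one, zpow_mul]
  have h2 : ε ^ (2 : ℤ) = 1 := by
    have := M2.sq ε
    rwa [← zpow_natCast, Nat.cast_ofNat] at this
  rw [h2, one_zpow, one_mul]

lemma isCyclic_map {G G' : Type*} [Group G] [Group G'] (f : G →* G') (K : Subgroup G)
    [IsCyclic K] : IsCyclic (K.map f) :=
  isCyclic_of_surjective (f.subgroupMap K) (f.subgroupMap_surjective K)

lemma exists_zpowers_eq {G : Type*} [Group G] (K : Subgroup G) (h : IsCyclic K) :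
    ∃ g : G, Subgroup.zpowers g = K := by
  obtain ⟨⟨g, hg⟩, hgen⟩ := h.exists_generator
  refine ⟨g, le_antisymm (zpowers_le.mpr hg) ?_⟩
  intro x hx
  obtain ⟨m, hm⟩ := hgen ⟨x, hx⟩
  exact ⟨m, congrArg Subtype.val hm⟩

lemma exists_odd_zpow {G : Type*} [Group G] [Finite G] {a b : G}
    (h : Subgroup.zpowers a = Subgroup.zpowers b) : ∃ k : ℤ, Odd k ∧ a ^ k = b := by
  have hb : b ∈ Subgroup.zpowers a := h ▸ mem_zpowers b
  have ha : a ∈ Subgroup.zpowers b := h ▸ mem_zpowers a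
  obtain ⟨m, hm⟩ := hb
  obtain ⟨l, hl⟩ := ha
  simp only at hm hl
  rcases Int.even_or_odd m with hme | hmo
  · -- m even, so orderOf a is odd
    have hml : a ^ (m * l) = a := by rw [zpow_mul, hm, hl]
    have hdvd : (orderOf a : ℤ) ∣ m * l - 1 := by
      rw [orderOf_dvd_iff_zpow_eq_one, zpow_sub, hml, zpow_one, mul_inv_cancel]
    have hodd : Odd (orderOf a : ℤ) := by
      rcases Int.even_or_odd (orderOf a : ℤ) with he | ho
      · exfalso
        have h2 : (2 : ℤ) ∣ m * l - 1 := dvd_trans he.two_dvd hdvd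
        have h2' : (2 : ℤ) ∣ m * l := Dvd.dvd.mul_right hme.two_dvd l
        omega
      · exact ho
    refine ⟨m + orderOf a, hme.add_odd hodd, ?_⟩
    rw [zpow_add, hm, zpow_natCast, pow_orderOf_eq_one, mul_one]
  · exact ⟨m, hmo, hm⟩

end Aux

lemma Prod.zpow_def {G G' : Type*} [Group G] [Group G'] (a : G) (b : G') (k : ℤ) :
    (a, b) ^ k = (a ^ k, b ^ k) := rfl

instance isCyclic_zpowers_s11 {G : Type*} [Group G] (g : G) : IsCyclic (zpowers g) := by
  refine ⟨⟨⟨g, mem_zpowers g⟩, fun x => ?_⟩⟩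
  obtain ⟨m, hm⟩ := x.2
  exact ⟨m, Subtype.ext (by simpa using hm)⟩

section Main

variable {H : Type*} [Group H] [Finite H]

lemma zpowers_pair_le {a b : H} (ε : M2) (h : zpowers a = zpowers b) :
    zpowers ((b, ε) : H × M2) ≤ zpowers (a, ε) := by
  obtain ⟨k, hk, hab⟩ := exists_odd_zpow h
  refine zpowers_le.mpr ⟨k, ?_⟩
  simp only [Prod.zpow_def, hab, M2.zpow_odd ε hk]

lemma zpowers_pair {a b : H} (ε : M2) (h : zpowers a = zpowers b) :
    zpowers ((a, ε) : H × M2) = zpowers (b, ε) :=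
  le_antisymm (zpowers_pair_le ε h.symm) (zpowers_pair_le ε h)

end Main

open scoped Classical in
noncomputable def cycEquiv (H : Type*) [Group H] [Finite H] :
    {K : Subgroup (H × M2) // IsCyclic K} ≃ {C : Subgroup H // IsCyclic C} × Bool where
  toFun K := (⟨K.1.map (MonoidHom.fst H M2), @isCyclic_map _ _ _ _ _ _ K.2⟩,
    if K.1 ≤ (MonoidHom.snd H M2).ker then false else true)
  invFun p := ⟨zpowers ((Classical.choose (exists_zpowers_eq p.1.1 p.1.2)),
      if p.2 then Multiplicative.ofAdd 1 else 1), _root_.isCyclic_zpowers_s11 _⟩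
  left_inv := by
    rintro ⟨K, hK⟩
    obtain ⟨gp, hgp⟩ := exists_zpowers_eq K hK
    obtain ⟨g, ε⟩ := gp
    have hmap : K.map (MonoidHom.fst H M2) = zpowers g := by
      rw [← hgp, MonoidHom.map_zpowers]; rfl
    have hsp := Classical.choose_spec
      (exists_zpowers_eq (K.map (MonoidHom.fst H M2)) (@isCyclic_map _ _ _ _ _ _ hK))
    set g₀ := Classical.choose
      (exists_zpowers_eq (K.map (MonoidHom.fst H M2)) (@isCyclic_map _ _ _ _ _ _ hK)) with hg₀
    have hzz : zpowers g₀ = zpowers g := by rw [hsp, hmap]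
    rcases M2.cases ε with rfl | rfl
    · have hker : K ≤ (MonoidHom.snd H M2).ker := by
        rw [← hgp]
        exact zpowers_le.mpr rfl
      refine Subtype.ext ?_
      dsimp only
      simp only [if_pos hker]
      show zpowers ((g₀, 1) : H × M2) = K
      rw [zpowers_pair _ hzz, hgp]
    · have hker : ¬ K ≤ (MonoidHom.snd H M2).ker := by
        intro hle
        have : (g, Multiplicative.ofAdd (1 : ZMod 2)) ∈ K := hgp ▸ mem_zpowers _
        have := hle this
        rw [MonoidHom.mem_ker] at this
        exact (by decide : (Multiplicative.ofAdd (1 : ZMod 2)) ≠ 1) this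
      refine Subtype.ext ?_
      dsimp only
      simp only [if_neg hker]
      show zpowers ((g₀, Multiplicative.ofAdd (1 : ZMod 2)) : H × M2) = K
      rw [zpowers_pair _ hzz, hgp]
  right_inv := by
    rintro ⟨⟨C, hC⟩, b⟩
    have hsp := Classical.choose_spec (exists_zpowers_eq C hC)
    set g₀ := Classical.choose (exists_zpowers_eq C hC) with hg₀
    cases b
    · have hker : zpowers ((g₀, 1) : H × M2) ≤ (MonoidHom.snd H M2).ker :=
        zpowers_le.mpr rfl
      refine Prod.ext (Subtype.ext ?_) ?_
      · simp only [if_neg Bool.false_ne_true]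
        rw [MonoidHom.map_zpowers]
        exact hsp
      · show (if zpowers ((g₀, (1:M2)) : H × M2) ≤ (MonoidHom.snd H M2).ker then false else true) = false
        rw [if_pos hker]
    · have hker : ¬ zpowers ((g₀, Multiplicative.ofAdd (1 : ZMod 2)) : H × M2) ≤
          (MonoidHom.snd H M2).ker := by
        intro hle
        have := hle (mem_zpowers _)
        rw [MonoidHom.mem_ker] at this
        exact (by decide : (Multiplicative.ofAdd (1 : ZMod 2)) ≠ 1) this
      refine Prod.ext (Subtype.ext ?_) ?_
      · simp only [if_pos]
        rw [MonoidHom.map_zpowers]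
        exact hsp
      · show (if zpowers ((g₀, Multiplicative.ofAdd (1 : ZMod 2)) : H × M2) ≤ (MonoidHom.snd H M2).ker then false else true) = true
        rw [if_neg hker]

lemma numCyc_prod (H : Type*) [Group H] [Finite H] :
    numCyc (H × M2) = 2 * numCyc H := by
  rw [numCyc, Nat.card_congr (cycEquiv H), Nat.card_prod, numCyc]
  simp [Nat.card_eq_fintype_card, mul_comm]

def invEquiv (H : Type*) [Group H] :
    {p : H × M2 // p ^ 2 = 1} ≃ {x : H // x ^ 2 = 1} × M2 where
  toFun q := (⟨q.1.1, congrArg Prod.fst q.2⟩, q.1.2)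
  invFun x := ⟨(x.1.1, x.2), Prod.ext x.1.2 (M2.sq x.2)⟩
  left_inv q := rfl
  right_inv x := rfl

lemma numInv_prod (H : Type*) [Group H] :
    numInv (H × M2) = 2 * numInv H := by
  rw [numInv, Nat.card_congr (invEquiv H), Nat.card_prod, numInv]
  simp [Nat.card_eq_fintype_card, mul_comm]

theorem stmt_11 (H : Type*) [Group H] [Finite H] (r : ℕ)
    (h : numInv H + r = numCyc H) :
    numInv (H × Multiplicative (ZMod 2)) + 2 * r =
      numCyc (H × Multiplicative (ZMod 2)) := by
  rw [numInv_prod H, numCyc_prod H]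
  omega
end

section
/- The set of values {∏_{j ∈ I} (p_j + 1)/(p_j + 2) : I a finite set of odd primes} is dense in the interval [0, 1]. -/
open Nat Finset Filter

lemma not_summable_one_div_nth_prime :
    ¬ Summable (fun n : ℕ => (1 : ℝ) / (Nat.nth Nat.Prime n)) := by
  have hbij : Function.Bijective
      (fun n : ℕ => (⟨Nat.nth Nat.Prime n, Nat.prime_nth_prime n⟩ : Nat.Primes)) := by
    constructor
    · intro a b h
      exact (Nat.nth_injective Nat.infinite_setOf_prime) (congrArg Subtype.val h)
    · intro p
      exact ⟨Nat.count Nat.Prime p, Subtype.ext (Nat.nth_count p.2)⟩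
  intro h
  exact Nat.Primes.not_summable_one_div
    (((Equiv.ofBijective _ hbij).summable_iff).mp h)

theorem stmt_16 :
    Set.Icc (0 : ℝ) 1 ⊆
      closure {x : ℝ | ∃ I : Finset ℕ, (∀ q ∈ I, Nat.Prime q ∧ Odd q) ∧
        x = ∏ q ∈ I, ((q : ℝ) + 1) / ((q : ℝ) + 2)} := by
  intro x hx
  obtain ⟨hx0, hx1⟩ := hx
  rw [Metric.mem_closure_iff]
  intro ε hε
  set δ : ℝ := min ε 1 / 2 with hδdef
  have hδ0 : 0 < δ := by
    have := lt_min hε one_pos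
    positivity
  have hδε : δ < ε := by
    have h1 : min ε 1 ≤ ε := min_le_left _ _
    simp only [hδdef]; linarith
  have hδ1 : δ ≤ 1/2 := by
    have h1 : min ε 1 ≤ 1 := min_le_right _ _
    simp only [hδdef]; linarith
  -- pick k with 1/k ≤ δ
  obtain ⟨k0, hk0⟩ := exists_nat_one_div_lt hδ0
  set k : ℕ := k0 + 1 with hkdef
  have hk : 1 / (k : ℝ) ≤ δ := by exact_mod_cast hk0.le
  have hkpos : (0:ℝ) < k := by positivity
  -- the sequence of primes
  set p : ℕ → ℕ := fun i => Nat.nth Nat.Prime (i + k) with hpdef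
  have hp_prime : ∀ i, Nat.Prime (p i) := fun i => Nat.prime_nth_prime _
  have hp_ge : ∀ i, i + k + 2 ≤ p i := fun i => Nat.add_two_le_nth_prime _
  have hp_inj : Function.Injective p := by
    intro a b h
    have := Nat.nth_injective Nat.infinite_setOf_prime h
    omega
  set f : ℕ → ℝ := fun i => ((p i : ℝ) + 1) / ((p i : ℝ) + 2) with hfdef
  have hq3 : ∀ i, (3:ℝ) ≤ p i := by
    intro i; have := hp_ge i
    have : (3:ℕ) ≤ p i := by omega
    exact_mod_cast this
  have hqk : ∀ i, (k:ℝ) ≤ p i := by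
    intro i; have := hp_ge i
    have : k ≤ p i := by omega
    exact_mod_cast this
  have hf_pos : ∀ i, 0 < f i := by
    intro i; have := hq3 i
    simp only [hfdef]; positivity
  have hf_le_one : ∀ i, f i ≤ 1 := by
    intro i; have := hq3 i
    rw [hfdef, div_le_one (by linarith)]; linarith
  have hf_ge : ∀ i, 1 - δ ≤ f i := by
    intro i
    have h1 : (k:ℝ) ≤ p i := hqk i
    have h2 : (1:ℝ) ≤ δ * k := by
      rw [div_le_iff₀ hkpos] at hk; linarith
    rw [hfdef, le_div_iff₀ (by linarith [hq3 i])]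
    nlinarith [hδ0.le]
  have hf_le_exp : ∀ i, f i ≤ Real.exp (-(1 / (3 * (p i : ℝ)))) := by
    intro i
    have h3 : (3:ℝ) ≤ p i := hq3 i
    have h1 : f i ≤ 1 - 1 / (3 * (p i : ℝ)) := by
      have h4 : (0:ℝ) < 3 * (p i : ℝ) := by linarith
      have ht : (1 / (3 * (p i : ℝ))) * (3 * (p i : ℝ)) = 1 := div_mul_cancel₀ 1 (ne_of_gt h4)
      have ht0 : (0:ℝ) ≤ 1 / (3 * (p i : ℝ)) := by positivity
      rw [hfdef, div_le_iff₀ (by linarith)]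
      nlinarith
    have h2 : 1 - 1 / (3 * (p i : ℝ)) ≤ Real.exp (-(1 / (3 * (p i : ℝ)))) := by
      have := Real.add_one_le_exp (-(1 / (3 * (p i : ℝ))))
      linarith
    linarith
  set P : ℕ → ℝ := fun n => ∏ i ∈ Finset.range n, f i with hPdef
  -- P n ≤ exp (-(sum))
  have hP_le : ∀ n, P n ≤ Real.exp (-(∑ i ∈ Finset.range n, 1 / (3 * (p i : ℝ)))) := by
    intro n
    calc P n ≤ ∏ i ∈ Finset.range n, Real.exp (-(1 / (3 * (p i : ℝ)))) :=
          Finset.prod_le_prod (fun i _ => (hf_pos i).le) (fun i _ => hf_le_exp i)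
      _ = Real.exp (∑ i ∈ Finset.range n, -(1 / (3 * (p i : ℝ)))) := (Real.exp_sum _ _).symm
      _ = _ := by rw [← Finset.sum_neg_distrib]
  -- divergence of the sum
  have hns : ¬ Summable (fun i : ℕ => 1 / (3 * (p i : ℝ))) := by
    intro h
    have h3 : Summable (fun i : ℕ => (1:ℝ) / (Nat.nth Nat.Prime (i + k))) := by
      have := h.mul_left 3
      refine this.congr fun i => ?_
      have h3 : (0:ℝ) < p i := by linarith [hq3 i]
      field_simp
      exact (div_self h3.ne').symm
    exact not_summable_one_div_nth_prime ((summable_nat_add_iff k).mp h3)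
  have hS : Tendsto (fun n => ∑ i ∈ Finset.range n, 1 / (3 * (p i : ℝ))) atTop atTop := by
    rw [← not_summable_iff_tendsto_nat_atTop_of_nonneg (fun i => by positivity)]
    exact hns
  have hP0 : Tendsto (fun n => Real.exp (-(∑ i ∈ Finset.range n, 1 / (3 * (p i : ℝ)))))
      atTop (nhds 0) :=
    Real.tendsto_exp_atBot.comp (tendsto_neg_atTop_atBot.comp hS)
  have hex : ∃ n, P n < x + δ := by
    obtain ⟨n, hn⟩ := (hP0.eventually_lt_const (by linarith : (0:ℝ) < x + δ)).exists
    exact ⟨n, lt_of_le_of_lt (hP_le n) hn⟩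
  classical
  obtain ⟨m, hm, hm'⟩ : ∃ m, P m < x + δ ∧ ∀ j < m, x + δ ≤ P j :=
    ⟨Nat.find hex, Nat.find_spec hex, fun j hj => le_of_not_gt (Nat.find_min hex hj)⟩
  refine ⟨P m, ⟨(Finset.range m).image p, ?_, ?_⟩, ?_⟩
  · intro q hq
    obtain ⟨i, _, rfl⟩ := Finset.mem_image.mp hq
    refine ⟨hp_prime i, (hp_prime i).odd_of_ne_two ?_⟩
    have := hp_ge i; omega
  · rw [Finset.prod_image (fun a _ b _ h => hp_inj h)]
  · rw [Real.dist_eq, abs_lt]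
    refine ⟨by linarith, ?_⟩
    -- x - P m < ε, i.e. P m > x - ε
    rcases Nat.eq_zero_or_pos m with hm0 | hm0
    · have : P m = 1 := by rw [hm0, hPdef]; simp
      linarith
    · obtain ⟨j, rfl⟩ : ∃ j, m = j + 1 := ⟨m - 1, by omega⟩
      have hPj : x + δ ≤ P j := hm' j (by omega)
      have hstep : P (j + 1) = P j * f j := Finset.prod_range_succ f j
      have h1 : 1 - δ ≤ f j := hf_ge j
      have h2 : f j ≤ 1 := hf_le_one j
      have h3 : (x + δ) * (1 - δ) ≤ P j * f j := by
        apply mul_le_mul hPj h1 (by linarith) (by linarith)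
      rw [hstep] at hm ⊢
      nlinarith
end
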